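/- Let R ~ Exp(μ) and I₁, …, I_{d−1} i.i.d. Exp(λ) independent of R, with λ, μ > 0 and integer d ≥ 3. Let X count the indices i with I_i < R. Then P{X ≤ 1} = (d−1)·μ/(μ + (d−2)λ) − (d−2)·μ/(μ + (d−1)λ). -/

import Mathlib

open MeasureTheory ProbabilityTheory

section AuxStmt11
open Real Set

lemma aux_map {Ω : Type*} [MeasurableSpace Ω] (Pr : Measure Ω) [IsProbabilityMeasure Pr]
    {a : ℝ} (ha : 0 < a) {Y : Ω → ℝ} (hY : Measurable Y)
    (hcdf : ∀ t : ℝ, 0 ≤ t → Pr {ω | Y ω ≤ t} = ENNReal.ofReal (1 - Real.exp (-a * t))) :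
    Pr.map Y = expMeasure a := by
  haveI := isProbabilityMeasure_expMeasure ha
  haveI : IsProbabilityMeasure (Pr.map Y) := Measure.isProbabilityMeasure_map hY.aemeasurable
  refine Measure.ext_of_Iic _ _ (fun t => ?_)
  rw [Measure.map_apply hY measurableSet_Iic]
  have hexp : expMeasure a (Iic t)
      = ENNReal.ofReal (if 0 ≤ t then 1 - Real.exp (-(a*t)) else 0) := by
    rw [show expMeasure a = volume.withDensity (exponentialPDF a) from rfl,
      withDensity_apply _ measurableSet_Iic, lintegral_exponentialPDF_eq_antiDeriv ha]
  by_cases ht : 0 ≤ t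
  · rw [hexp, if_pos ht]
    have := hcdf t ht
    rw [show Y ⁻¹' Iic t = {ω | Y ω ≤ t} from rfl, this, neg_mul]
  · rw [hexp, if_neg ht]
    have h0 : Pr {ω | Y ω ≤ 0} = 0 := by
      rw [hcdf 0 le_rfl]; simp
    have hsub : Y ⁻¹' Iic t ⊆ {ω | Y ω ≤ 0} :=
      fun ω hω => le_trans hω (le_of_not_ge ht)
    rw [measure_mono_null hsub h0]; simp

lemma aux_Ici {Ω : Type*} [MeasurableSpace Ω] (Pr : Measure Ω) [IsProbabilityMeasure Pr]
    {a : ℝ} (ha : 0 < a) {Y : Ω → ℝ} (hY : Measurable Y)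
    (hmap : Pr.map Y = expMeasure a) (r : ℝ) :
    Pr {ω | r ≤ Y ω} = ENNReal.ofReal (Real.exp (-(a * max r 0))) := by
  haveI := isProbabilityMeasure_expMeasure ha
  have h1 : Pr {ω | r ≤ Y ω} = Pr.map Y (Ici r) := by
    rw [Measure.map_apply hY measurableSet_Ici]; rfl
  have hIio : expMeasure a (Iio r)
      = ENNReal.ofReal (if 0 ≤ r then 1 - Real.exp (-(a*r)) else 0) := by
    rw [show expMeasure a = volume.withDensity (exponentialPDF a) from rfl,
      withDensity_apply _ measurableSet_Iio,
      setLIntegral_congr (Iio_ae_eq_Iic (a := r)),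
      lintegral_exponentialPDF_eq_antiDeriv ha]
  have hcompl : expMeasure a (Ici r) = 1 - expMeasure a (Iio r) := by
    rw [← compl_Iio, measure_compl measurableSet_Iio (measure_ne_top _ _), measure_univ]
  by_cases hr : 0 ≤ r
  · rw [h1, hmap, hcompl, hIio, if_pos hr, max_eq_left hr]
    have he0 : (0:ℝ) ≤ Real.exp (-(a*r)) := (Real.exp_pos _).le
    have he : Real.exp (-(a*r)) ≤ 1 := by
      rw [Real.exp_le_one_iff]; nlinarith
    rw [← ENNReal.ofReal_one, ← ENNReal.ofReal_sub _ (by linarith)]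
    norm_num
  · rw [h1, hmap, hcompl, hIio, if_neg hr, max_eq_right (le_of_not_ge hr)]
    simp

lemma aux_key {Ω : Type*} [MeasurableSpace Ω] (Pr : Measure Ω) [IsProbabilityMeasure Pr]
    (lam mu : ℝ) (hlam : 0 < lam) (hmu : 0 < mu) {n : ℕ}
    (R : Ω → ℝ) (I : Fin n → Ω → ℝ)
    (hRmeas : Measurable R) (hImeas : ∀ i, Measurable (I i))
    (hRmap : Pr.map R = expMeasure mu)
    (hIci : ∀ i (r : ℝ), Pr {ω | r ≤ I i ω} = ENNReal.ofReal (Real.exp (-(lam * max r 0))))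
    (hindep : iIndepFun
      (Sum.elim (fun i : Fin n => I i) (fun _ : Unit => R)) Pr)
    (s : Finset (Fin n)) :
    Pr (⋂ j ∈ s, {ω | R ω ≤ I j ω}) = ENNReal.ofReal (mu / (mu + s.card * lam)) := by
  classical
  set c : ℝ := s.card * lam with hc
  have hc0 : 0 ≤ c := by positivity
  have hmc : 0 < mu + c := by linarith
  set F := Sum.elim (fun i : Fin n => I i) (fun _ : Unit => R) with hF
  have hFmeas : ∀ j, Measurable (F j) := by
    rintro (i | u)
    · exact hImeas i
    · exact hRmeas
  set T : Finset (Fin n ⊕ Unit) := s.image Sum.inl with hT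
  set V : Ω → (T → ℝ) := fun ω j => F j ω with hV
  have hVmeas : Measurable V := measurable_pi_lambda _ fun j => hFmeas j
  haveI : IsProbabilityMeasure (Pr.map V) := Measure.isProbabilityMeasure_map hVmeas.aemeasurable
  -- independence of R and V
  have hRV : IndepFun R V Pr := by
    have hdisj : Disjoint ({Sum.inr ()} : Finset (Fin n ⊕ Unit)) T := by
      simp [hT, Finset.disjoint_left]
    have h := hindep.indepFun_finset ({Sum.inr ()} : Finset (Fin n ⊕ Unit)) T hdisj hFmeas
    have h2 := h.comp (measurable_pi_apply (⟨Sum.inr (), by simp⟩ :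
      ({Sum.inr ()} : Finset (Fin n ⊕ Unit)))) measurable_id
    exact h2
  have hmapRV : Pr.map (fun ω => (R ω, V ω)) = (Pr.map R).prod (Pr.map V) :=
    (indepFun_iff_map_prod_eq_prod_map_map hRmeas.aemeasurable hVmeas.aemeasurable).mp hRV
  set A' : Set (ℝ × (T → ℝ)) := {p | ∀ j, p.1 ≤ p.2 j} with hA'
  have hA'm : MeasurableSet A' := by
    have : A' = ⋂ j : T, {p : ℝ × (T → ℝ) | p.1 ≤ p.2 j} := by
      ext p; simp [hA', Set.mem_iInter]
    rw [this]
    exact MeasurableSet.iInter fun j =>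
      measurableSet_le measurable_fst ((measurable_pi_apply j).comp measurable_snd)
  have hevent : (⋂ j ∈ s, {ω | R ω ≤ I j ω}) = (fun ω => (R ω, V ω)) ⁻¹' A' := by
    ext ω
    simp only [Set.mem_iInter, Set.mem_preimage, hA', Set.mem_setOf_eq]
    constructor
    · rintro h ⟨j, hj⟩
      obtain ⟨i, hi, rfl⟩ := Finset.mem_image.mp hj
      exact h i hi
    · intro h i hi
      exact h ⟨Sum.inl i, Finset.mem_image_of_mem _ hi⟩
  have hslice : ∀ r : ℝ,
      (Pr.map V) (Prod.mk r ⁻¹' A') = ENNReal.ofReal (Real.exp (-(c * max r 0))) := by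
    intro r
    have hsm : MeasurableSet (Prod.mk r ⁻¹' A') := hA'm.preimage measurable_prodMk_left
    rw [Measure.map_apply hVmeas hsm]
    have h2 : V ⁻¹' (Prod.mk r ⁻¹' A') = ⋂ j ∈ T, F j ⁻¹' Ici r := by
      ext ω
      simp only [Set.mem_preimage, hA', Set.mem_setOf_eq, Set.mem_iInter, Set.mem_Ici, hV]
      constructor
      · intro h j hj; exact h ⟨j, hj⟩
      · rintro h ⟨j, hj⟩; exact h j hj
    rw [h2, hindep.meas_biInter (fun j hj => ⟨Ici r, measurableSet_Ici, rfl⟩)]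
    have h3 : ∀ j ∈ T, Pr (F j ⁻¹' Ici r) = ENNReal.ofReal (Real.exp (-(lam * max r 0))) := by
      intro j hj
      obtain ⟨i, hi, rfl⟩ := Finset.mem_image.mp hj
      exact hIci i r
    rw [Finset.prod_congr rfl h3, Finset.prod_const,
      show T.card = s.card from Finset.card_image_of_injective _ Sum.inl_injective,
      ← ENNReal.ofReal_pow (Real.exp_pos _).le, ← Real.exp_nat_mul]
    congr 1
    rw [hc]; ring
  have hpdfmeas : ∀ b : ℝ, Measurable (exponentialPDF b) := fun b =>
    (measurable_exponentialPDFReal b).ennreal_ofReal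
  have hg : Measurable fun r : ℝ => ENNReal.ofReal (Real.exp (-(c * max r 0))) :=
    (Real.measurable_exp.comp (((measurable_id.max measurable_const).const_mul c).neg)).ennreal_ofReal
  have hptwise : ∀ r : ℝ, exponentialPDF mu r * ENNReal.ofReal (Real.exp (-(c * max r 0)))
      = ENNReal.ofReal (mu/(mu+c)) * exponentialPDF (mu + c) r := by
    intro r
    rcases lt_or_ge r 0 with hr | hr
    · rw [exponentialPDF_of_neg hr, exponentialPDF_of_neg hr, zero_mul, mul_zero]
    · rw [exponentialPDF_of_nonneg hr, exponentialPDF_of_nonneg hr, max_eq_left hr,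
        ← ENNReal.ofReal_mul (mul_nonneg hmu.le (Real.exp_pos _).le),
        ← ENNReal.ofReal_mul (div_nonneg hmu.le hmc.le)]
      congr 1
      have h1 : mu / (mu+c) * ((mu+c) * Real.exp (-((mu+c) * r)))
          = mu * Real.exp (-((mu+c)*r)) := by
        rw [← mul_assoc, div_mul_cancel₀ _ (ne_of_gt hmc)]
      rw [h1, mul_assoc, ← Real.exp_add]
      congr 2
      ring
  calc Pr (⋂ j ∈ s, {ω | R ω ≤ I j ω})
      = Pr.map (fun ω => (R ω, V ω)) A' := by
        rw [Measure.map_apply (hRmeas.prodMk hVmeas) hA'm, ← hevent]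
    _ = ((Pr.map R).prod (Pr.map V)) A' := by rw [hmapRV]
    _ = ∫⁻ r, (Pr.map V) (Prod.mk r ⁻¹' A') ∂(Pr.map R) := Measure.prod_apply hA'm
    _ = ∫⁻ r, ENNReal.ofReal (Real.exp (-(c * max r 0))) ∂(expMeasure mu) := by
        rw [hRmap]; exact lintegral_congr hslice
    _ = ∫⁻ r, exponentialPDF mu r * ENNReal.ofReal (Real.exp (-(c * max r 0))) := by
        rw [show expMeasure mu = volume.withDensity (exponentialPDF mu) from rfl,
          lintegral_withDensity_eq_lintegral_mul _ (hpdfmeas mu) hg]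
        rfl
    _ = ∫⁻ r, ENNReal.ofReal (mu/(mu+c)) * exponentialPDF (mu + c) r :=
        lintegral_congr hptwise
    _ = ENNReal.ofReal (mu/(mu+c)) := by
        rw [lintegral_const_mul _ (hpdfmeas (mu+c)), lintegral_exponentialPDF_eq_one hmc, mul_one]

end AuxStmt11

section MainStmt11
open Real Set
theorem stmt_11 {Ω : Type*} [MeasurableSpace Ω] (Pr : Measure Ω) [IsProbabilityMeasure Pr]
    (lam mu : ℝ) (hlam : 0 < lam) (hmu : 0 < mu) (d : ℕ) (hd : 3 ≤ d)
    (R : Ω → ℝ) (I : Fin (d - 1) → Ω → ℝ)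
    (hRmeas : Measurable R) (hImeas : ∀ i, Measurable (I i))
    (hRdist : ∀ t : ℝ, 0 ≤ t → Pr {ω | R ω ≤ t} = ENNReal.ofReal (1 - Real.exp (-mu * t)))
    (hIdist : ∀ i, ∀ t : ℝ, 0 ≤ t →
      Pr {ω | I i ω ≤ t} = ENNReal.ofReal (1 - Real.exp (-lam * t)))
    (hindep : iIndepFun
      (Sum.elim (fun i : Fin (d - 1) => I i) (fun _ : Unit => R)) Pr)
    (X : Ω → ℕ) (hX : ∀ ω, X ω = (Finset.univ.filter fun i : Fin (d - 1) => I i ω < R ω).card) :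
    Pr {ω | X ω ≤ 1} =
      ENNReal.ofReal (((d : ℝ) - 1) * (mu / (mu + ((d : ℝ) - 2) * lam)) -
        ((d : ℝ) - 2) * (mu / (mu + ((d : ℝ) - 1) * lam))) :=
  by
  classical
  set A : Fin (d - 1) → Set Ω := fun i => {ω | R ω ≤ I i ω} with hA
  have hAmeas : ∀ i, MeasurableSet (A i) := fun i => measurableSet_le hRmeas (hImeas i)
  have hRmap : Pr.map R = expMeasure mu := aux_map Pr hmu hRmeas hRdist
  have hIci : ∀ i (r : ℝ), Pr {ω | r ≤ I i ω} = ENNReal.ofReal (Real.exp (-(lam * max r 0))) :=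
    fun i r => aux_Ici Pr hlam (hImeas i) (aux_map Pr hlam (hImeas i) (hIdist i)) r
  have key : ∀ s : Finset (Fin (d - 1)),
      Pr (⋂ j ∈ s, A j) = ENNReal.ofReal (mu / (mu + s.card * lam)) :=
    fun s => aux_key Pr lam mu hlam hmu R I hRmeas hImeas hRmap hIci hindep s
  set B : Fin (d - 1) → Set Ω := fun i => (A i)ᶜ ∩ ⋂ j ∈ Finset.univ.erase i, A j with hB
  have hBmeas : ∀ i, MeasurableSet (B i) := fun i =>
    ((hAmeas i).compl).inter (MeasurableSet.biInter (Finset.univ.erase i).countable_toSet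
      fun j _ => hAmeas j)
  have hset : {ω | X ω ≤ 1}
      = (⋂ j ∈ (Finset.univ : Finset (Fin (d - 1))), A j) ∪ ⋃ i, B i := by
    ext ω
    simp only [Set.mem_setOf_eq, hX, Set.mem_union, Set.mem_iUnion, Set.mem_iInter,
      Set.mem_inter_iff, Set.mem_compl_iff, hB, hA, Finset.mem_erase, Finset.mem_univ,
      and_true, true_and]
    constructor
    · intro h
      by_cases hex : ∃ i, I i ω < R ω
      · obtain ⟨i, hi⟩ := hex
        right; refine ⟨i, not_le.mpr hi, ?_⟩
        intro j hj
        by_contra hcon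
        have hsub : ({i, j} : Finset (Fin (d - 1))) ⊆
            Finset.univ.filter fun k => I k ω < R ω := by
          intro k hk
          simp only [Finset.mem_insert, Finset.mem_singleton] at hk
          rcases hk with rfl | rfl
          · simp [hi]
          · simp [not_le.mp hcon]
        have h2 := Finset.card_le_card hsub
        rw [Finset.card_insert_of_notMem (by simp [Ne.symm hj]),
          Finset.card_singleton] at h2
        omega
      · left
        intro j _
        exact not_lt.mp (fun hjlt => hex ⟨j, hjlt⟩)
    · intro h
      rcases h with h | ⟨i, hAi, hrest⟩
      · have hemp : (Finset.univ.filter fun k : Fin (d - 1) => I k ω < R ω) = ∅ := by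
          apply Finset.filter_eq_empty_iff.mpr
          intro k _
          exact not_lt.mpr (h k trivial)
        simp [hemp]
      · have hsub : (Finset.univ.filter fun k : Fin (d - 1) => I k ω < R ω) ⊆ {i} := by
          intro k hk
          rw [Finset.mem_filter] at hk
          rw [Finset.mem_singleton]
          by_contra hki
          exact not_lt.mpr (hrest k hki) hk.2
        calc (Finset.univ.filter fun k : Fin (d - 1) => I k ω < R ω).card
            ≤ ({i} : Finset (Fin (d - 1))).card := Finset.card_le_card hsub
          _ = 1 := Finset.card_singleton i
  have hdisj1 : Disjoint (⋂ j ∈ (Finset.univ : Finset (Fin (d - 1))), A j) (⋃ i, B i) := by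
    rw [Set.disjoint_left]
    intro ω hω hω2
    rw [Set.mem_iUnion] at hω2
    obtain ⟨i, hωi⟩ := hω2
    rw [Set.mem_iInter] at hω
    have := hω i
    rw [Set.mem_iInter] at this
    exact hωi.1 (this (Finset.mem_univ i))
  have hdisj2 : Pairwise (Function.onFun Disjoint B) := by
    intro i j hij
    rw [Function.onFun, Set.disjoint_left]
    intro ω hωi hωj
    have h1 : ω ∉ A i := hωi.1
    have h2 : ω ∈ A i := by
      have h3 := hωj.2
      rw [Set.mem_iInter] at h3
      have h4 := h3 i
      rw [Set.mem_iInter] at h4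
      exact h4 (Finset.mem_erase.mpr ⟨hij, Finset.mem_univ i⟩)
    exact h1 h2
  have hcard_univ : (Finset.univ : Finset (Fin (d - 1))).card = d - 1 := by simp
  have hnR : (((d - 1 : ℕ)) : ℝ) = (d : ℝ) - 1 := by
    rw [Nat.cast_sub (by omega)]; norm_num
  have hn1R : (((d - 1 - 1 : ℕ)) : ℝ) = (d : ℝ) - 2 := by
    rw [Nat.cast_sub (by omega), Nat.cast_sub (by omega)]; push_cast; ring
  set a : ℝ := mu / (mu + ((d:ℝ) - 1) * lam) with ha
  set b : ℝ := mu / (mu + ((d:ℝ) - 2) * lam) with hb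
  have hd3 : (3:ℝ) ≤ (d:ℝ) := by exact_mod_cast hd
  have hb_pos : 0 < mu + ((d:ℝ) - 2) * lam := by nlinarith
  have ha_pos : 0 < mu + ((d:ℝ) - 1) * lam := by nlinarith
  have hab : a ≤ b := by
    rw [ha, hb]
    apply div_le_div_of_nonneg_left hmu.le hb_pos
    nlinarith
  have ha0 : 0 ≤ a := div_nonneg hmu.le ha_pos.le
  have hkey_univ : Pr (⋂ j ∈ (Finset.univ : Finset (Fin (d - 1))), A j)
      = ENNReal.ofReal a := by
    rw [key Finset.univ, hcard_univ, hnR]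
  have hBval : ∀ i, Pr (B i) = ENNReal.ofReal (b - a) := by
    intro i
    have hsplit : (⋂ j ∈ Finset.univ.erase i, A j)
        = (⋂ j ∈ (Finset.univ : Finset (Fin (d - 1))), A j) ∪ B i := by
      ext ω
      simp only [Set.mem_iInter, Set.mem_union, Set.mem_inter_iff, Set.mem_compl_iff, hB,
        Finset.mem_erase, Finset.mem_univ, and_true, true_and]
      constructor
      · intro h
        by_cases hAi : ω ∈ A i
        · left
          intro j _
          by_cases hji : j = i
          · rwa [hji]
          · exact h j hji
        · right
          exact ⟨hAi, fun j hj => h j hj⟩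
      · rintro (h | ⟨_, h⟩) j hj
        · exact h j trivial
        · exact h j hj
    have hdisj : Disjoint (⋂ j ∈ (Finset.univ : Finset (Fin (d - 1))), A j) (B i) := by
      rw [Set.disjoint_left]
      intro ω hω hω2
      rw [Set.mem_iInter] at hω
      have := hω i
      rw [Set.mem_iInter] at this
      exact hω2.1 (this (Finset.mem_univ i))
    have heq := key (Finset.univ.erase i)
    rw [hsplit, measure_union hdisj (hBmeas i), hkey_univ,
      Finset.card_erase_of_mem (Finset.mem_univ i), hcard_univ, hn1R] at heq
    have heq2 : Pr (B i) + ENNReal.ofReal a = ENNReal.ofReal b := by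
      rw [add_comm]; exact heq
    have hfin := ENNReal.eq_sub_of_add_eq ENNReal.ofReal_ne_top heq2
    rw [hfin, ← ENNReal.ofReal_sub _ ha0]
  rw [hset, measure_union hdisj1 (MeasurableSet.iUnion fun i => hBmeas i),
    measure_iUnion hdisj2 hBmeas, hkey_univ, tsum_fintype]
  simp only [hBval]
  rw [Finset.sum_const, hcard_univ, nsmul_eq_mul,
    ← ENNReal.ofReal_natCast, ← ENNReal.ofReal_mul (Nat.cast_nonneg (d - 1)),
    ← ENNReal.ofReal_add ha0 (mul_nonneg (Nat.cast_nonneg (d - 1)) (by linarith))]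
  congr 1
  rw [hnR, ha, hb]
  ring

end MainStmt11
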